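/- Let S be the exact top-k set of scores x_1 >= ... >= x_n (so S = {1,...,k}), and let G_j ~ Gumbel(0,1) i.i.d. for j in S. Define B = max_{j in S}(x_j + G_j) - min_{j in S} x_j, and let C ~ Binomial(n - k, 1 - exp(-exp(-B))) conditioned on B. Then E[C] <= n/k; in particular, for k = ceil(sqrt(n)), E[C] <= sqrt(n). -/

import Mathlib

open MeasureTheory ProbabilityTheory Real Finset

/-- Expected number of extra samples in lazy Gumbel sampling: with `S = {1, …, k}` the
exact top-`k` of the (descending) scores `x`, i.i.d. Gumbel noise `G j` on `S`,
threshold `B = max_{j∈S}(x j + G j) - min_{j∈S} x j`, and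
`C ~ Bin(n - k, 1 - exp (-exp (-B)))` given `B`, the expectation
`E[C] = (n - k) E[1 - exp (-exp (-B))]` is at most `n / k`; in particular for
`k = ⌈√n⌉` it is at most `√n`. -/
theorem lazy_gumbel_expected_extra_samples {Ω : Type*} [MeasurableSpace Ω]
    (μ : Measure Ω) [IsProbabilityMeasure μ] {n k : ℕ} (hk : 0 < k) (hkn : k ≤ n)
    (x : Fin n → ℝ) (hsorted : ∀ i j : Fin n, i ≤ j → x j ≤ x i)
    (G : Fin k → Ω → ℝ) (hmeas : ∀ j, Measurable (G j))
    (hindep : iIndepFun G μ)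
    (hcdf : ∀ j t, μ {ω | G j ω ≤ t} = ENNReal.ofReal (Real.exp (-Real.exp (-t))))
    (B : Ω → ℝ)
    (hB : ∀ ω, B ω =
      (⨆ j : Fin k, (x (Fin.castLE hkn j) + G j ω)) - ⨅ j : Fin k, x (Fin.castLE hkn j)) :
    ((n : ℝ) - k) * ∫ ω, (1 - Real.exp (-Real.exp (-(B ω)))) ∂μ ≤ (n : ℝ) / k ∧
    (k = ⌈Real.sqrt n⌉₊ →
      ((n : ℝ) - k) * ∫ ω, (1 - Real.exp (-Real.exp (-(B ω)))) ∂μ ≤ Real.sqrt n) := by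
  have hne : Nonempty (Fin k) := ⟨⟨0, hk⟩⟩
  set f : ℝ → ℝ := fun g => 1 - Real.exp (-Real.exp (-g)) with hfdef
  have hf_nonneg : ∀ g, 0 ≤ f g := by
    intro g
    have h1 : Real.exp (-Real.exp (-g)) ≤ Real.exp 0 :=
      Real.exp_le_exp.mpr (neg_nonpos.mpr (Real.exp_pos _).le)
    simp only [Real.exp_zero] at h1
    simp only [hfdef]
    linarith
  have hf_anti : ∀ {a b : ℝ}, a ≤ b → f b ≤ f a := by
    intro a b hab
    have h1 : Real.exp (-b) ≤ Real.exp (-a) := Real.exp_le_exp.mpr (neg_le_neg hab)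
    have h2 : Real.exp (-Real.exp (-a)) ≤ Real.exp (-Real.exp (-b)) :=
      Real.exp_le_exp.mpr (neg_le_neg h1)
    simp only [hfdef]
    linarith
  have hf_cont : Continuous f := by
    simp only [hfdef]
    continuity
  have hf_meas : Measurable f := hf_cont.measurable
  have hBm : Measurable B := by
    have hB' : B = fun ω =>
        (⨆ j : Fin k, (x (Fin.castLE hkn j) + G j ω)) - ⨅ j : Fin k, x (Fin.castLE hkn j) :=
      funext hB
    rw [hB']
    exact (Measurable.iSup (fun j => (hmeas j).const_add _)).sub measurable_const
  have hBge : ∀ (ω : Ω) (j : Fin k), G j ω ≤ B ω := by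
    intro ω j
    rw [hB]
    have h1 : x (Fin.castLE hkn j) + G j ω ≤ ⨆ i : Fin k, (x (Fin.castLE hkn i) + G i ω) :=
      le_ciSup (f := fun i : Fin k => x (Fin.castLE hkn i) + G i ω) (Set.Finite.bddAbove (Set.finite_range _)) j
    have h2 : (⨅ i : Fin k, x (Fin.castLE hkn i)) ≤ x (Fin.castLE hkn j) :=
      ciInf_le (f := fun i : Fin k => x (Fin.castLE hkn i)) (Set.Finite.bddBelow (Set.finite_range _)) j
    linarith
  -- per-variable tail probability
  have hvar : ∀ t : ℝ, 0 < t → ∀ j : Fin k,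
      μ (G j ⁻¹' {g | t ≤ f g}) = ENNReal.ofReal (1 - t) := by
    intro t ht j
    rcases le_or_gt 1 t with h1 | h1
    · have hempty : (G j ⁻¹' {g | t ≤ f g}) = ∅ := by
        ext ω
        simp only [Set.mem_preimage, Set.mem_setOf_eq, Set.mem_empty_iff_false, iff_false,
          not_le, hfdef]
        have := Real.exp_pos (-Real.exp (-(G j ω)))
        linarith
      rw [hempty, measure_empty, Eq.comm, ENNReal.ofReal_eq_zero]
      linarith
    · have hu0 : (0:ℝ) < 1 - t := by linarith
      have hlogu : Real.log (1 - t) < 0 := Real.log_neg hu0 (by linarith)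
      have hnlu : (0:ℝ) < -Real.log (1 - t) := by linarith
      have hset : {g : ℝ | t ≤ f g} = Set.Iic (-Real.log (-Real.log (1 - t))) := by
        ext g
        simp only [Set.mem_setOf_eq, Set.mem_Iic, hfdef]
        rw [le_sub_comm, ← Real.le_log_iff_exp_le hu0, neg_le,
          ← Real.log_le_iff_le_exp hnlu, le_neg]
      have hpre : G j ⁻¹' {g | t ≤ f g} = {ω | G j ω ≤ -Real.log (-Real.log (1 - t))} := by
        rw [hset]; rfl
      rw [hpre, hcdf j]
      congr 1
      rw [neg_neg, Real.exp_log hnlu, neg_neg, Real.exp_log hu0]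
  -- tail bound for f ∘ B
  have htail : ∀ t ∈ Set.Ioi (0:ℝ),
      μ {ω | t ≤ f (B ω)} ≤ ENNReal.ofReal (1 - t) ^ k := by
    intro t ht
    have ht' : (0:ℝ) < t := ht
    have hsub : {ω | t ≤ f (B ω)} ⊆ ⋂ j : Fin k, G j ⁻¹' {g | t ≤ f g} := by
      intro ω hω
      simp only [Set.mem_iInter, Set.mem_preimage, Set.mem_setOf_eq]
      intro j
      exact le_trans hω (hf_anti (hBge ω j))
    refine le_trans (measure_mono hsub) ?_
    have hmeasInt : μ (⋂ j : Fin k, G j ⁻¹' {g | t ≤ f g})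
        = ∏ j : Fin k, μ (G j ⁻¹' {g | t ≤ f g}) := by
      apply hindep.meas_iInter
      intro j
      exact ⟨{g | t ≤ f g}, measurableSet_le measurable_const hf_meas, rfl⟩
    rw [hmeasInt]
    simp_rw [hvar t ht']
    simp
  have hfB_meas : Measurable fun ω => f (B ω) := hf_meas.comp hBm
  set I := ∫ ω, (1 - Real.exp (-Real.exp (-(B ω)))) ∂μ with hIdef
  have hIeq : I = ∫ ω, f (B ω) ∂μ := rfl
  have hI_nonneg : 0 ≤ I := by
    rw [hIeq]; exact integral_nonneg fun ω => hf_nonneg (B ω)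
  have key : I ≤ 1 / ((k : ℝ) + 1) := by
    rw [hIeq]
    rw [integral_eq_lintegral_of_nonneg_ae
      (Filter.Eventually.of_forall fun ω => hf_nonneg (B ω)) hfB_meas.aestronglyMeasurable]
    refine ENNReal.toReal_le_of_le_ofReal (by positivity) ?_
    rw [lintegral_eq_lintegral_meas_le μ
      (Filter.Eventually.of_forall fun ω => hf_nonneg (B ω)) hfB_meas.aemeasurable]
    have hgmeas : Measurable fun t : ℝ => ENNReal.ofReal (1 - t) ^ k :=
      (ENNReal.measurable_ofReal.comp (measurable_const.sub measurable_id)).pow_const k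
    refine le_trans (setLIntegral_mono hgmeas htail) ?_
    -- compute ∫⁻ t in Ioi 0, ofReal (1 - t) ^ k
    have hsplit : (∫⁻ t in Set.Ioi (0:ℝ), ENNReal.ofReal (1 - t) ^ k)
        = (∫⁻ t in Set.Ioc (0:ℝ) 1, ENNReal.ofReal (1 - t) ^ k)
          + ∫⁻ t in Set.Ioi (1:ℝ), ENNReal.ofReal (1 - t) ^ k := by
      rw [← lintegral_union measurableSet_Ioi Set.Ioc_disjoint_Ioi_same,
        Set.Ioc_union_Ioi_eq_Ioi zero_le_one]
    have hzero : (∫⁻ t in Set.Ioi (1:ℝ), ENNReal.ofReal (1 - t) ^ k) = 0 := by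
      rw [setLIntegral_congr_fun measurableSet_Ioi
        (fun t (ht : 1 < t) => ?_), lintegral_zero]
      rw [ENNReal.ofReal_eq_zero.mpr (by linarith), zero_pow hk.ne']
    have hIoc : (∫⁻ t in Set.Ioc (0:ℝ) 1, ENNReal.ofReal (1 - t) ^ k)
        = ENNReal.ofReal (1 / ((k : ℝ) + 1)) := by
      rw [setLIntegral_congr_fun measurableSet_Ioc
        (fun t (ht : t ∈ Set.Ioc (0:ℝ) 1) =>
          (ENNReal.ofReal_pow (by linarith [ht.2]) k).symm)]
      have hint : IntegrableOn (fun t : ℝ => (1 - t) ^ k) (Set.Ioc 0 1) volume :=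
        (((continuous_const.sub continuous_id).pow k).integrableOn_Ioc)
      rw [← ofReal_integral_eq_lintegral_ofReal hint
        ((ae_restrict_iff' measurableSet_Ioc).mpr
          (ae_of_all _ fun t ht => pow_nonneg (by linarith [ht.2]) k))]
      congr 1
      rw [← intervalIntegral.integral_of_le zero_le_one]
      have := intervalIntegral.integral_comp_sub_left (a := (0:ℝ)) (b := 1)
        (fun u => u ^ k) 1
      rw [this]
      norm_num [integral_pow]
    rw [hsplit, hzero, hIoc, add_zero]
  have hkR : (1:ℝ) ≤ (k : ℝ) := by exact_mod_cast hk
  have hnk : (k:ℝ) ≤ (n:ℝ) := by exact_mod_cast hkn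
  have hfrac : ((n : ℝ) - k) * I ≤ (n : ℝ) / k := by
    have h1 : ((n:ℝ) - k) * I ≤ ((n:ℝ) - k) * (1 / ((k:ℝ) + 1)) :=
      mul_le_mul_of_nonneg_left key (by linarith)
    have h2 : ((n:ℝ) - k) * (1 / ((k:ℝ) + 1)) ≤ (n:ℝ) / k := by
      rw [mul_one_div, div_le_div_iff₀ (by linarith) (by linarith)]
      nlinarith [sq_nonneg ((k:ℝ))]
    linarith
  refine ⟨hfrac, fun hkc => hfrac.trans ?_⟩
  have hn1 : (1:ℝ) ≤ (n:ℝ) := le_trans hkR hnk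
  have hsqpos : 0 < Real.sqrt n := Real.sqrt_pos.mpr (by linarith)
  have hsq : Real.sqrt n ≤ (k : ℝ) := by
    rw [hkc]
    exact_mod_cast Nat.le_ceil (Real.sqrt n)
  calc (n : ℝ) / k ≤ (n : ℝ) / Real.sqrt n := by
        apply div_le_div_of_nonneg_left (by linarith) hsqpos hsq
    _ = Real.sqrt n := Real.div_sqrt
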